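/- For every n ≥ 1, d ≥ 1, every pair of subsets A, B ⊆ [n], and every τ ≥ 0, the following two tail bounds hold: P( e_π(A,B) ≥ (1+τ)·(d/n)·|A|·|B| ) ≤ exp( −(τ²/(2+τ))·(d/n)·|A|·|B| ), and P( e_π(A,B) ≤ (1−τ)·(d/n)·|A|·|B| ) ≤ exp( −(τ²/2)·(d/n)·|A|·|B| ), where π = (π1,…,πd) is a tuple of d independent uniformly random permutations of [n]. -/

import Mathlib

open scoped Classical

noncomputable section

/-- Number of directed edges from `A` to `B` in the permutation model, counting
multiplicity: `e_π(A,B) = Σ_k #{i ∈ A : π_k(i) ∈ B}`. -/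
def eperm {n d : ℕ} (π : Fin d → Equiv.Perm (Fin n)) (A B : Finset (Fin n)) : ℕ :=
  ∑ k : Fin d, (A.filter fun i => π k i ∈ B).card

/-- Probability of the event `E` for a uniformly random `d`-tuple of permutations of `[n]`. -/
def PrPerm (n d : ℕ) (E : (Fin d → Equiv.Perm (Fin n)) → Prop) : ℝ :=
  ((Finset.univ.filter fun π : Fin d → Equiv.Perm (Fin n) => E π).card : ℝ) /
    (Fintype.card (Fin d → Equiv.Perm (Fin n)) : ℝ)

open Finset

/-- Key step: adding one more constrained point multiplies the count by at most |B|/n. -/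
lemma count_step (n : ℕ) (B s : Finset (Fin n)) (a : Fin n) (ha : a ∉ s) :
    (univ.filter fun σ : Equiv.Perm (Fin n) => ∀ i ∈ insert a s, σ i ∈ B).card * n ≤
      B.card * (univ.filter fun σ : Equiv.Perm (Fin n) => ∀ i ∈ s, σ i ∈ B).card := by
  set C : Fin n → ℕ := fun y =>
    (univ.filter fun σ : Equiv.Perm (Fin n) => (∀ i ∈ s, σ i ∈ B) ∧ σ a = y).card with hC
  have hkey : ∀ y ∈ B, ∀ z : Fin n, C y ≤ C z := by
    intro y hy z
    apply Finset.card_le_card_of_injOn (fun σ => Equiv.swap y z * σ)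
    · intro σ hσ
      simp only [mem_coe, mem_filter, mem_univ, true_and] at hσ ⊢
      obtain ⟨h1, h2⟩ := hσ
      constructor
      · intro i hi
        have hne : σ i ≠ y := by
          rw [← h2]
          intro h
          exact ha (by simpa [σ.injective h] using hi)
        by_cases hz : σ i = z
        · rw [Equiv.Perm.mul_apply, hz, Equiv.swap_apply_right]
          exact hy
        · rw [Equiv.Perm.mul_apply, Equiv.swap_apply_of_ne_of_ne hne hz]
          exact h1 i hi
      · rw [Equiv.Perm.mul_apply, h2, Equiv.swap_apply_left]
    · intro σ₁ _ σ₂ _ h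
      exact mul_left_cancel h
  have hsum : (univ.filter fun σ : Equiv.Perm (Fin n) => ∀ i ∈ s, σ i ∈ B).card
      = ∑ z : Fin n, C z := by
    rw [Finset.card_eq_sum_card_fiberwise (f := fun σ : Equiv.Perm (Fin n) => σ a)
      (t := univ) (fun x _ => mem_univ _)]
    refine Finset.sum_congr rfl fun z _ => ?_
    rw [hC]; congr 1
    rw [Finset.filter_filter]
  have hins : (univ.filter fun σ : Equiv.Perm (Fin n) => ∀ i ∈ insert a s, σ i ∈ B).card
      = ∑ y ∈ B, C y := by
    have : (univ.filter fun σ : Equiv.Perm (Fin n) => ∀ i ∈ insert a s, σ i ∈ B)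
        = (univ.filter fun σ : Equiv.Perm (Fin n) => (∀ i ∈ s, σ i ∈ B) ∧ σ a ∈ B) := by
      apply Finset.filter_congr
      intro σ _
      simp [Finset.forall_mem_insert, and_comm]
    rw [this]
    rw [Finset.card_eq_sum_card_fiberwise (f := fun σ : Equiv.Perm (Fin n) => σ a)
      (t := B) (fun x hx => (Finset.mem_filter.mp hx).2.2)]
    refine Finset.sum_congr rfl fun y hy => ?_
    rw [hC]; congr 1
    rw [Finset.filter_filter]
    apply Finset.filter_congr
    intro σ _
    constructor
    · rintro ⟨⟨h1, _⟩, h2⟩; exact ⟨h1, h2⟩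
    · rintro ⟨h1, h2⟩; exact ⟨⟨h1, h2 ▸ hy⟩, h2⟩
  rw [hins, hsum, Finset.sum_mul]
  calc ∑ y ∈ B, C y * n = ∑ y ∈ B, ∑ _z : Fin n, C y := by
        simp [Finset.sum_const, Finset.card_univ, mul_comm]
    _ ≤ ∑ y ∈ B, ∑ z : Fin n, C z := by
        refine Finset.sum_le_sum fun y hy => Finset.sum_le_sum fun z _ => hkey y hy z
    _ = B.card * ∑ z : Fin n, C z := by rw [Finset.sum_const, smul_eq_mul]

lemma count_le (n : ℕ) (B t : Finset (Fin n)) :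
    (univ.filter fun σ : Equiv.Perm (Fin n) => ∀ i ∈ t, σ i ∈ B).card * n ^ t.card ≤
      B.card ^ t.card * Fintype.card (Equiv.Perm (Fin n)) := by
  induction t using Finset.induction_on with
  | empty => simp [Finset.card_univ]
  | @insert a s ha ih =>
    rw [Finset.card_insert_of_notMem ha, pow_succ, pow_succ]
    calc (univ.filter fun σ : Equiv.Perm (Fin n) => ∀ i ∈ insert a s, σ i ∈ B).card *
          (n ^ s.card * n)
        = ((univ.filter fun σ : Equiv.Perm (Fin n) => ∀ i ∈ insert a s, σ i ∈ B).card * n) *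
          n ^ s.card := by ring
      _ ≤ (B.card * (univ.filter fun σ : Equiv.Perm (Fin n) => ∀ i ∈ s, σ i ∈ B).card) *
          n ^ s.card := Nat.mul_le_mul_right _ (count_step n B s a ha)
      _ = B.card * ((univ.filter fun σ : Equiv.Perm (Fin n) => ∀ i ∈ s, σ i ∈ B).card *
          n ^ s.card) := by ring
      _ ≤ B.card * (B.card ^ s.card * Fintype.card (Equiv.Perm (Fin n))) :=
          Nat.mul_le_mul_left _ ih
      _ = B.card ^ s.card * B.card * Fintype.card (Equiv.Perm (Fin n)) := by ring

lemma count_le_real (n : ℕ) (hn : 0 < n) (B t : Finset (Fin n)) :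
    ((univ.filter fun σ : Equiv.Perm (Fin n) => ∀ i ∈ t, σ i ∈ B).card : ℝ) ≤
      ((B.card : ℝ) / n) ^ t.card * Fintype.card (Equiv.Perm (Fin n)) := by
  have h := count_le n B t
  have hn' : (0:ℝ) < (n:ℝ) ^ t.card := by positivity
  rw [div_pow, div_mul_eq_mul_div, le_div_iff₀ hn']
  calc ((univ.filter fun σ : Equiv.Perm (Fin n) => ∀ i ∈ t, σ i ∈ B).card : ℝ) * (n:ℝ) ^ t.card
      = (((univ.filter fun σ : Equiv.Perm (Fin n) => ∀ i ∈ t, σ i ∈ B).card * n ^ t.card : ℕ) : ℝ) := by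
        push_cast; ring
    _ ≤ ((B.card ^ t.card * Fintype.card (Equiv.Perm (Fin n)) : ℕ) : ℝ) := by exact_mod_cast h
    _ = (B.card:ℝ) ^ t.card * Fintype.card (Equiv.Perm (Fin n)) := by push_cast; ring

/-- Single-permutation MGF-type bound. -/
lemma mgf_single (n : ℕ) (hn : 0 < n) (A B : Finset (Fin n)) (c : ℝ) (hc : 0 ≤ c) :
    ∑ σ : Equiv.Perm (Fin n), ∏ i ∈ A, (1 + c * (if σ i ∈ B then (1:ℝ) else 0)) ≤
      (1 + c * ((B.card : ℝ) / n)) ^ A.card * Fintype.card (Equiv.Perm (Fin n)) := by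
  have expand : ∀ σ : Equiv.Perm (Fin n),
      ∏ i ∈ A, (1 + c * (if σ i ∈ B then (1:ℝ) else 0)) =
      ∑ t ∈ A.powerset, c ^ t.card * (if ∀ i ∈ t, σ i ∈ B then (1:ℝ) else 0) := by
    intro σ
    have : ∀ i, (1 + c * (if σ i ∈ B then (1:ℝ) else 0)) =
        (c * (if σ i ∈ B then (1:ℝ) else 0)) + 1 := fun i => by ring
    simp_rw [this]
    rw [Finset.prod_add]
    refine Finset.sum_congr rfl fun t ht => ?_
    rw [Finset.prod_const_one, mul_one, Finset.prod_mul_distrib, Finset.prod_const,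
      Finset.prod_boole]
    congr
  calc ∑ σ : Equiv.Perm (Fin n), ∏ i ∈ A, (1 + c * (if σ i ∈ B then (1:ℝ) else 0))
      = ∑ t ∈ A.powerset, c ^ t.card *
          ((univ.filter fun σ : Equiv.Perm (Fin n) => ∀ i ∈ t, σ i ∈ B).card : ℝ) := by
        simp_rw [expand]
        rw [Finset.sum_comm]
        refine Finset.sum_congr rfl fun t ht => ?_
        rw [← Finset.mul_sum, Finset.sum_boole]
    _ ≤ ∑ t ∈ A.powerset, c ^ t.card *
          (((B.card : ℝ) / n) ^ t.card * Fintype.card (Equiv.Perm (Fin n))) := by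
        refine Finset.sum_le_sum fun t _ => ?_
        exact mul_le_mul_of_nonneg_left (count_le_real n hn B t) (by positivity)
    _ = (∑ t ∈ A.powerset, (c * ((B.card : ℝ) / n)) ^ t.card) *
          Fintype.card (Equiv.Perm (Fin n)) := by
        rw [Finset.sum_mul]; refine Finset.sum_congr rfl fun t _ => by rw [mul_pow]; ring
    _ = (1 + c * ((B.card : ℝ) / n)) ^ A.card * Fintype.card (Equiv.Perm (Fin n)) := by
        congr 1
        have h2 := Finset.prod_add (fun _ : Fin n => c * ((B.card : ℝ) / n)) (fun _ => (1:ℝ)) A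
        simp only [Finset.prod_const, Finset.prod_const_one, mul_one, one_pow] at h2
        rw [add_comm, ← h2]

lemma mgf_single_exp (n : ℕ) (hn : 0 < n) (A B : Finset (Fin n)) (θ : ℝ) (hθ : 0 ≤ θ) :
    ∑ σ : Equiv.Perm (Fin n), Real.exp (θ * ((A.filter fun i => σ i ∈ B).card : ℝ)) ≤
      (1 + (Real.exp θ - 1) * ((B.card : ℝ) / n)) ^ A.card *
        Fintype.card (Equiv.Perm (Fin n)) := by
  have hc : (0:ℝ) ≤ Real.exp θ - 1 := by
    have := Real.one_le_exp hθ; linarith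
  have key : ∀ σ : Equiv.Perm (Fin n),
      Real.exp (θ * ((A.filter fun i => σ i ∈ B).card : ℝ)) =
      ∏ i ∈ A, (1 + (Real.exp θ - 1) * (if σ i ∈ B then (1:ℝ) else 0)) := by
    intro σ
    rw [Finset.card_filter]
    push_cast
    rw [Finset.mul_sum, Real.exp_sum]
    refine Finset.prod_congr rfl fun i _ => ?_
    by_cases h : σ i ∈ B <;> simp [h]
  simp_rw [key]
  exact mgf_single n hn A B _ hc

lemma mgf_tuple (n d : ℕ) (hn : 0 < n) (A B : Finset (Fin n)) (θ : ℝ) (hθ : 0 ≤ θ) :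
    ∑ π : Fin d → Equiv.Perm (Fin n), Real.exp (θ * (eperm π A B : ℝ)) ≤
      (1 + (Real.exp θ - 1) * ((B.card : ℝ) / n)) ^ (d * A.card) *
        Fintype.card (Fin d → Equiv.Perm (Fin n)) := by
  have factor : ∑ π : Fin d → Equiv.Perm (Fin n), Real.exp (θ * (eperm π A B : ℝ)) =
      (∑ σ : Equiv.Perm (Fin n),
        Real.exp (θ * ((A.filter fun i => σ i ∈ B).card : ℝ))) ^ d := by
    have : ∀ π : Fin d → Equiv.Perm (Fin n), Real.exp (θ * (eperm π A B : ℝ)) =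
        ∏ k : Fin d, Real.exp (θ * (((A.filter fun i => π k i ∈ B).card : ℕ) : ℝ)) := by
      intro π
      rw [eperm]; push_cast
      rw [Finset.mul_sum, Real.exp_sum]
    simp_rw [this]
    have e1 := Finset.prod_univ_sum (fun _ : Fin d => (univ : Finset (Equiv.Perm (Fin n))))
      (fun _ σ => Real.exp (θ * ((A.filter fun i => σ i ∈ B).card : ℝ)))
    simp only [Fintype.piFinset_univ, Finset.prod_const, Finset.card_univ,
      Fintype.card_fin] at e1
    exact e1.symm
  rw [factor]
  have h1 := mgf_single_exp n hn A B θ hθ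
  have hnn : (0:ℝ) ≤ ∑ σ : Equiv.Perm (Fin n),
      Real.exp (θ * ((A.filter fun i => σ i ∈ B).card : ℝ)) :=
    Finset.sum_nonneg fun _ _ => (Real.exp_pos _).le
  calc (∑ σ : Equiv.Perm (Fin n),
        Real.exp (θ * ((A.filter fun i => σ i ∈ B).card : ℝ))) ^ d
      ≤ ((1 + (Real.exp θ - 1) * ((B.card : ℝ) / n)) ^ A.card *
          Fintype.card (Equiv.Perm (Fin n))) ^ d := pow_le_pow_left₀ hnn h1 d
    _ = (1 + (Real.exp θ - 1) * ((B.card : ℝ) / n)) ^ (d * A.card) *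
        Fintype.card (Fin d → Equiv.Perm (Fin n)) := by
        rw [mul_pow, ← pow_mul, Fintype.card_fun, Fintype.card_fin, mul_comm A.card d]
        push_cast
        ring

/-- Markov-type bound for the upper tail. -/
lemma markov_upper (n d : ℕ) (hn : 0 < n) (A B : Finset (Fin n)) (θ t : ℝ) (hθ : 0 ≤ θ) :
    PrPerm n d (fun π => t ≤ (eperm π A B : ℝ)) ≤
      Real.exp (-θ * t) * (1 + (Real.exp θ - 1) * ((B.card : ℝ) / n)) ^ (d * A.card) := by
  have hcard : (0:ℝ) < Fintype.card (Fin d → Equiv.Perm (Fin n)) := by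
    exact_mod_cast Fintype.card_pos
  rw [PrPerm, div_le_iff₀ hcard]
  have h1 : ((Finset.univ.filter fun π : Fin d → Equiv.Perm (Fin n) =>
      t ≤ (eperm π A B : ℝ)).card : ℝ) * Real.exp (θ * t) ≤
      ∑ π : Fin d → Equiv.Perm (Fin n), Real.exp (θ * (eperm π A B : ℝ)) := by
    calc ((Finset.univ.filter fun π : Fin d → Equiv.Perm (Fin n) =>
          t ≤ (eperm π A B : ℝ)).card : ℝ) * Real.exp (θ * t)
        = ∑ _π ∈ (Finset.univ.filter fun π : Fin d → Equiv.Perm (Fin n) =>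
            t ≤ (eperm π A B : ℝ)), Real.exp (θ * t) := by
          rw [Finset.sum_const, nsmul_eq_mul]
      _ ≤ ∑ π ∈ (Finset.univ.filter fun π : Fin d → Equiv.Perm (Fin n) =>
            t ≤ (eperm π A B : ℝ)), Real.exp (θ * (eperm π A B : ℝ)) := by
          refine Finset.sum_le_sum fun π hπ => ?_
          have := (Finset.mem_filter.mp hπ).2
          exact Real.exp_le_exp.mpr (mul_le_mul_of_nonneg_left this hθ)
      _ ≤ ∑ π : Fin d → Equiv.Perm (Fin n), Real.exp (θ * (eperm π A B : ℝ)) :=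
          Finset.sum_le_sum_of_subset_of_nonneg (Finset.filter_subset _ _)
            (fun _ _ _ => (Real.exp_pos _).le)
  have h2 := mgf_tuple n d hn A B θ hθ
  have h3 := le_trans h1 h2
  have hexp : (0:ℝ) < Real.exp (θ * t) := Real.exp_pos _
  rw [← le_div_iff₀ hexp] at h3
  calc ((Finset.univ.filter fun π : Fin d → Equiv.Perm (Fin n) =>
        t ≤ (eperm π A B : ℝ)).card : ℝ)
      ≤ (1 + (Real.exp θ - 1) * ((B.card : ℝ) / n)) ^ (d * A.card) *
        Fintype.card (Fin d → Equiv.Perm (Fin n)) / Real.exp (θ * t) := h3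
    _ = Real.exp (-θ * t) * (1 + (Real.exp θ - 1) * ((B.card : ℝ) / n)) ^ (d * A.card) *
        Fintype.card (Fin d → Equiv.Perm (Fin n)) := by
        rw [div_eq_mul_inv, ← Real.exp_neg]
        ring_nf

/-- `log(1+x) ≥ 2x/(2+x)` for `x ≥ 0`. -/
lemma log_ge_aux (x : ℝ) (hx : 0 ≤ x) : 2 * x / (2 + x) ≤ Real.log (1 + x) := by
  set g : ℝ → ℝ := fun y => (2 + y) * Real.log (1 + y) - 2 * y with hg
  have hmono : MonotoneOn g (Set.Ici (0:ℝ)) := by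
    have hderiv : ∀ y ∈ Set.Ici (0:ℝ), HasDerivAt g
        (Real.log (1 + y) + (2 + y) * (1 / (1 + y)) - 2) y := by
      intro y hy
      have hy0 : (0:ℝ) ≤ y := hy
      have h1 : HasDerivAt (fun z : ℝ => 1 + z) 1 y := (hasDerivAt_id y).const_add 1
      have h2 : HasDerivAt (fun z : ℝ => Real.log (1 + z)) (1 / (1 + y)) y := by
        have := h1.log (by linarith)
        simpa using this
      have h3 : HasDerivAt (fun z : ℝ => 2 + z) 1 y := (hasDerivAt_id y).const_add 2
      have h4 := h3.mul h2
      have h5 : HasDerivAt (fun z : ℝ => 2 * z) 2 y := by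
        simpa using (hasDerivAt_id y).const_mul 2
      have := h4.sub h5
      exact this.congr_deriv (by ring)
    apply monotoneOn_of_deriv_nonneg (convex_Ici 0)
    · exact HasDerivAt.continuousOn hderiv
    · intro y hy
      rw [interior_Ici] at hy
      exact (hderiv y (Set.mem_Ici.mpr (le_of_lt (Set.mem_Ioi.mp hy)))).differentiableAt.differentiableWithinAt
    · intro y hy
      rw [interior_Ici] at hy
      have hy0 : (0:ℝ) < y := hy
      rw [(hderiv y hy0.le).deriv]
      have hlog : 1 - 1 / (1 + y) ≤ Real.log (1 + y) := by
        have h := Real.log_le_sub_one_of_pos (x := 1 / (1 + y)) (by positivity)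
        rw [Real.log_div one_ne_zero (by linarith), Real.log_one] at h
        linarith
      have : (2 + y) * (1 / (1 + y)) = 1 + 1 / (1 + y) := by
        field_simp; ring
      rw [this]
      linarith
  have h0 : g 0 = 0 := by simp [hg]
  have := hmono (Set.self_mem_Ici) (Set.mem_Ici.mpr hx) hx
  rw [h0] at this
  -- this : 0 ≤ (2+x) * log(1+x) - 2x
  rw [div_le_iff₀ (by linarith : (0:ℝ) < 2 + x)]
  simp only [hg] at this
  linarith [this]

/-- `s·log s + (1 - s²)/2 ≥ 0` for `s ∈ (0, 1]`. -/
lemma slogs_aux (s : ℝ) (hs0 : 0 < s) (hs1 : s ≤ 1) :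
    0 ≤ s * Real.log s + (1 - s ^ 2) / 2 := by
  set ψ : ℝ → ℝ := fun y => y * Real.log y + (1 - y ^ 2) / 2 with hψ
  have hanti : AntitoneOn ψ (Set.Icc s 1) := by
    have hderiv : ∀ y ∈ Set.Icc s 1, HasDerivAt ψ (Real.log y + 1 - y) y := by
      intro y hy
      have hy0 : (0:ℝ) < y := lt_of_lt_of_le hs0 hy.1
      have h1 : HasDerivAt (fun z : ℝ => z * Real.log z) (Real.log y + 1) y := by
        have h2 := (hasDerivAt_id y).mul (Real.hasDerivAt_log hy0.ne')
        exact h2.congr_deriv (by simp [hy0.ne'])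
      have h3 : HasDerivAt (fun z : ℝ => (1 - z ^ 2) / 2) (-y) y := by
        have h4 : HasDerivAt (fun z : ℝ => z ^ 2) (2 * y) y := by
          simpa using (hasDerivAt_pow 2 y)
        have h5 := ((h4.const_sub 1).div_const 2)
        exact h5.congr_deriv (by ring)
      have h6 := h1.add h3
      exact h6.congr_deriv (by ring)
    apply antitoneOn_of_deriv_nonpos (convex_Icc s 1)
    · exact HasDerivAt.continuousOn hderiv
    · intro y hy
      rw [interior_Icc] at hy
      exact (hderiv y (Set.mem_Icc_of_Ioo hy)).differentiableAt.differentiableWithinAt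
    · intro y hy
      rw [interior_Icc] at hy
      have hy0 : (0:ℝ) < y := lt_trans hs0 hy.1
      rw [(hderiv y (Set.mem_Icc_of_Ioo hy)).deriv]
      have := Real.log_le_sub_one_of_pos hy0
      linarith
  have h1 : ψ 1 = 0 := by simp [hψ]
  have := hanti (Set.mem_Icc.mpr ⟨le_refl s, hs1⟩) (Set.mem_Icc.mpr ⟨hs1, le_refl 1⟩) hs1
  rw [h1] at this
  simpa [hψ] using this

lemma prPerm_nonneg (n d : ℕ) (E : (Fin d → Equiv.Perm (Fin n)) → Prop) :
    0 ≤ PrPerm n d E := by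
  unfold PrPerm; positivity

lemma prPerm_le_one (n d : ℕ) (E : (Fin d → Equiv.Perm (Fin n)) → Prop) :
    PrPerm n d E ≤ 1 := by
  unfold PrPerm
  have hcard : (0:ℝ) < Fintype.card (Fin d → Equiv.Perm (Fin n)) := by
    exact_mod_cast Fintype.card_pos
  rw [div_le_one hcard]
  exact_mod_cast Finset.card_le_card (Finset.filter_subset _ _) |>.trans
    (le_of_eq (Finset.card_univ))

lemma prPerm_mono (n d : ℕ) (E F : (Fin d → Equiv.Perm (Fin n)) → Prop)
    (h : ∀ π, E π → F π) : PrPerm n d E ≤ PrPerm n d F := by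
  unfold PrPerm
  have hsub : (Finset.univ.filter fun π : Fin d → Equiv.Perm (Fin n) => E π) ⊆
      (Finset.univ.filter fun π : Fin d → Equiv.Perm (Fin n) => F π) := by
    intro π hπ
    simp only [Finset.mem_filter] at *
    exact ⟨hπ.1, h π hπ.2⟩
  have hc := Finset.card_le_card hsub
  gcongr


lemma eperm_add_compl {n d : ℕ} (π : Fin d → Equiv.Perm (Fin n)) (A B : Finset (Fin n)) :
    eperm π A B + eperm π A Bᶜ = d * A.card := by
  unfold eperm
  rw [← Finset.sum_add_distrib]
  have : ∀ k : Fin d, (A.filter fun i => π k i ∈ B).card +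
      (A.filter fun i => π k i ∈ Bᶜ).card = A.card := by
    intro k
    have h1 : (A.filter fun i => π k i ∈ Bᶜ) = (A.filter fun i => ¬ (π k i ∈ B)) := by
      apply Finset.filter_congr; intro i _; simp [Finset.mem_compl]
    rw [h1]
    exact Finset.card_filter_add_card_filter_not _
  rw [Finset.sum_congr rfl fun k _ => this k]
  simp [Finset.sum_const, mul_comm]

lemma upper_tail (n d : ℕ) (hn : 1 ≤ n) (A B : Finset (Fin n)) (τ : ℝ) (hτ : 0 ≤ τ) :
    PrPerm n d (fun π =>
        (1 + τ) * (((d : ℝ) / n) * A.card * B.card) ≤ (eperm π A B : ℝ)) ≤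
      Real.exp (-(τ ^ 2 / (2 + τ)) * (((d : ℝ) / n) * A.card * B.card)) := by
  have hn0 : 0 < n := hn
  have hnR : (0:ℝ) < n := by exact_mod_cast hn
  set μ : ℝ := ((d : ℝ) / n) * A.card * B.card with hμdef
  have hμ0 : 0 ≤ μ := by positivity
  set θ := Real.log (1+τ) with hθdef
  have hθ : 0 ≤ θ := Real.log_nonneg (by linarith)
  have hexpθ : Real.exp θ = 1 + τ := Real.exp_log (by linarith)
  set p : ℝ := (B.card:ℝ)/n with hpdef
  have hp0 : 0 ≤ p := by positivity
  have hμeq : ((d*A.card : ℕ) : ℝ) * (τ * p) = τ * μ := by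
    push_cast [hpdef, hμdef]; ring
  have h1 := markov_upper n d hn0 A B θ ((1+τ)*μ) hθ
  have h2 : (1 + (Real.exp θ - 1) * p) ^ (d*A.card) ≤ Real.exp (τ * μ) := by
    have hb : (0:ℝ) ≤ 1 + τ*p := by positivity
    have he : 1 + τ*p ≤ Real.exp (τ*p) := by
      have := Real.add_one_le_exp (τ*p); linarith
    calc (1 + (Real.exp θ - 1) * p) ^ (d*A.card)
        = (1 + τ*p) ^ (d*A.card) := by rw [hexpθ]; ring_nf
      _ ≤ (Real.exp (τ*p)) ^ (d*A.card) := pow_le_pow_left₀ hb he _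
      _ = Real.exp (((d*A.card : ℕ) : ℝ) * (τ*p)) := by
          rw [← Real.exp_nat_mul]
      _ = Real.exp (τ*μ) := by rw [hμeq]
  calc PrPerm n d (fun π => (1 + τ) * μ ≤ (eperm π A B : ℝ))
      ≤ Real.exp (-θ*((1+τ)*μ)) * (1 + (Real.exp θ - 1) * p) ^ (d*A.card) := h1
    _ ≤ Real.exp (-θ*((1+τ)*μ)) * Real.exp (τ*μ) :=
        mul_le_mul_of_nonneg_left h2 (Real.exp_pos _).le
    _ = Real.exp (-θ*((1+τ)*μ) + τ*μ) := (Real.exp_add _ _).symm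
    _ ≤ Real.exp (-(τ ^ 2 / (2 + τ)) * μ) := by
        apply Real.exp_le_exp.mpr
        have hl : 2*τ/(2+τ) ≤ θ := log_ge_aux τ hτ
        have h3 : (2*τ/(2+τ))*((1+τ)*μ) ≤ θ*((1+τ)*μ) := by
          apply mul_le_mul_of_nonneg_right hl (by positivity)
        have h4 : τ*μ - (2*τ/(2+τ))*((1+τ)*μ) = -(τ^2/(2+τ))*μ := by
          field_simp
          ring
        linarith

lemma lower_mgf (n d : ℕ) (hn : 1 ≤ n) (A B : Finset (Fin n)) (t θ : ℝ) (hθ : 0 ≤ θ) :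
    PrPerm n d (fun π => (eperm π A B : ℝ) ≤ t) ≤
      Real.exp ((Real.exp (-θ) - 1) * (((d : ℝ) / n) * A.card * B.card) + θ * t) := by
  have hn0 : 0 < n := hn
  have hnR : (0:ℝ) < n := by exact_mod_cast hn
  set μ : ℝ := ((d : ℝ) / n) * A.card * B.card with hμdef
  set p : ℝ := (B.card:ℝ)/n with hpdef
  have hbn : B.card ≤ n := by
    have := Finset.card_le_univ B
    simpa [Finset.card_univ] using this
  have hp0 : 0 ≤ p := by positivity
  have hp1 : p ≤ 1 := by
    rw [hpdef, div_le_one hnR]; exact_mod_cast hbn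
  have hcompl : ((Bᶜ.card : ℝ)/n) = 1 - p := by
    rw [Finset.card_compl]
    simp only [Fintype.card_fin]
    rw [Nat.cast_sub hbn]
    rw [hpdef, sub_div, div_self hnR.ne']
  have step1 : PrPerm n d (fun π => (eperm π A B : ℝ) ≤ t) ≤
      PrPerm n d (fun π => ((d:ℝ) * A.card - t) ≤ (eperm π A Bᶜ : ℝ)) := by
    apply prPerm_mono
    intro π h
    have := eperm_add_compl π A B
    have hcast : (eperm π A B : ℝ) + (eperm π A Bᶜ : ℝ) = (d:ℝ) * A.card := by
      exact_mod_cast this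
    linarith
  have step2 := markov_upper n d hn0 A Bᶜ θ ((d:ℝ) * A.card - t) hθ
  rw [hcompl] at step2
  have hbase : Real.exp (-θ) * (1 + (Real.exp θ - 1) * (1 - p)) = 1 + p * (Real.exp (-θ) - 1) := by
    have h : Real.exp (-θ) * Real.exp θ = 1 := by
      rw [← Real.exp_add]; simp
    nlinarith [h]
  have hbase0 : (0:ℝ) ≤ 1 + p * (Real.exp (-θ) - 1) := by
    have h5 : 0 ≤ p * Real.exp (-θ) := by positivity
    nlinarith
  have hb2 : 1 + p * (Real.exp (-θ) - 1) ≤ Real.exp (p * (Real.exp (-θ) - 1)) := by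
    have := Real.add_one_le_exp (p * (Real.exp (-θ) - 1)); linarith
  have hμeq : ((d*A.card : ℕ) : ℝ) * (p * (Real.exp (-θ) - 1)) = (Real.exp (-θ) - 1) * μ := by
    push_cast [hpdef, hμdef]; ring
  have key : Real.exp (-θ*((d:ℝ) * A.card - t)) *
      (1 + (Real.exp θ - 1) * (1 - p)) ^ (d*A.card) ≤
      Real.exp ((Real.exp (-θ) - 1) * μ + θ * t) := by
    have e1 : Real.exp (-θ*((d:ℝ) * A.card - t)) =
        Real.exp (θ * t) * (Real.exp (-θ)) ^ (d*A.card) := by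
      rw [← Real.exp_nat_mul, ← Real.exp_add]
      congr 1
      push_cast
      ring
    rw [e1, mul_assoc, ← mul_pow, hbase]
    calc Real.exp (θ * t) * (1 + p * (Real.exp (-θ) - 1)) ^ (d*A.card)
        ≤ Real.exp (θ * t) * (Real.exp (p * (Real.exp (-θ) - 1))) ^ (d*A.card) := by
          apply mul_le_mul_of_nonneg_left _ (Real.exp_pos _).le
          exact pow_le_pow_left₀ hbase0 hb2 _
      _ = Real.exp ((Real.exp (-θ) - 1) * μ + θ * t) := by
          rw [← Real.exp_nat_mul, hμeq, ← Real.exp_add]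
          congr 1
          ring
  calc PrPerm n d (fun π => (eperm π A B : ℝ) ≤ t)
      ≤ PrPerm n d (fun π => ((d:ℝ) * A.card - t) ≤ (eperm π A Bᶜ : ℝ)) := step1
    _ ≤ Real.exp (-θ*((d:ℝ) * A.card - t)) *
        (1 + (Real.exp θ - 1) * (1 - p)) ^ (d*A.card) := step2
    _ ≤ Real.exp ((Real.exp (-θ) - 1) * μ + θ * t) := key

lemma lower_tail (n d : ℕ) (hn : 1 ≤ n) (A B : Finset (Fin n)) (τ : ℝ) (hτ : 0 ≤ τ) :
    PrPerm n d (fun π =>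
        (eperm π A B : ℝ) ≤ (1 - τ) * (((d : ℝ) / n) * A.card * B.card)) ≤
      Real.exp (-(τ ^ 2 / 2) * (((d : ℝ) / n) * A.card * B.card)) := by
  have hnR : (0:ℝ) < n := by exact_mod_cast hn
  set μ : ℝ := ((d : ℝ) / n) * A.card * B.card with hμdef
  have hμ0 : 0 ≤ μ := by positivity
  rcases lt_or_ge τ 1 with hτ1 | hτ1
  · -- main case τ < 1
    have h1τ : (0:ℝ) < 1 - τ := by linarith
    set θ : ℝ := -Real.log (1-τ) with hθdef
    have hθ : 0 ≤ θ := by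
      have h := Real.log_nonpos (x := 1 - τ) (by linarith) (by linarith)
      simp only [hθdef]; linarith
    have hexp : Real.exp (-θ) = 1 - τ := by
      rw [hθdef, neg_neg, Real.exp_log h1τ]
    have h := lower_mgf n d hn A B ((1-τ)*μ) θ hθ
    refine h.trans (Real.exp_le_exp.mpr ?_)
    rw [hexp, hθdef]
    -- goal: ((1-τ)-1)*μ + (-log(1-τ))*((1-τ)*μ) ≤ -(τ^2/2)*μ
    have hs := slogs_aux (1-τ) h1τ (by linarith)
    have hscal : -τ - (1-τ)*Real.log (1-τ) ≤ -(τ^2/2) := by nlinarith [hs]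
    nlinarith [mul_le_mul_of_nonneg_right hscal hμ0]
  · rcases eq_or_lt_of_le hμ0 with hμz | hμpos
    · -- μ = 0
      have : Real.exp (-(τ ^ 2 / 2) * μ) = 1 := by
        rw [← hμz]; simp
      rw [this]
      exact prPerm_le_one n d _
    · rcases eq_or_lt_of_le hτ1 with hτe | hτgt
      · -- τ = 1
        have h := lower_mgf n d hn A B ((1-τ)*μ) (Real.log 2) (Real.log_nonneg (by norm_num))
        refine h.trans (Real.exp_le_exp.mpr ?_)
        have hexp : Real.exp (-Real.log 2) = 1/2 := by
          rw [Real.exp_neg, Real.exp_log (by norm_num : (0:ℝ) < 2)]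
          norm_num
        rw [hexp, ← hτe]
        norm_num
        exact le_of_eq hμdef
      · -- τ > 1 : event impossible
        have hempty : PrPerm n d (fun π => (eperm π A B : ℝ) ≤ (1 - τ) * μ) = 0 := by
          unfold PrPerm
          have : (Finset.univ.filter fun π : Fin d → Equiv.Perm (Fin n) =>
              (eperm π A B : ℝ) ≤ (1 - τ) * μ) = ∅ := by
            apply Finset.filter_false_of_mem
            intro π _
            have h1 : (1 - τ) * μ < 0 := mul_neg_of_neg_of_pos (by linarith) hμpos
            have h2 : (0:ℝ) ≤ (eperm π A B : ℝ) := Nat.cast_nonneg _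
            linarith
          rw [this]
          simp
        rw [hempty]
        exact (Real.exp_pos _).le

theorem stmt_7 :
    ∀ n d : ℕ, 1 ≤ n → 1 ≤ d → ∀ A B : Finset (Fin n), ∀ τ : ℝ, 0 ≤ τ →
      PrPerm n d (fun π =>
          (1 + τ) * (((d : ℝ) / n) * A.card * B.card) ≤ (eperm π A B : ℝ)) ≤
        Real.exp (-(τ ^ 2 / (2 + τ)) * (((d : ℝ) / n) * A.card * B.card)) ∧
      PrPerm n d (fun π =>
          (eperm π A B : ℝ) ≤ (1 - τ) * (((d : ℝ) / n) * A.card * B.card)) ≤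
        Real.exp (-(τ ^ 2 / 2) * (((d : ℝ) / n) * A.card * B.card)) := by
  intro n d hn hd A B τ hτ
  exact ⟨upper_tail n d hn A B τ hτ, lower_tail n d hn A B τ hτ⟩
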